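/- For odd n > 5, the automaton K_n = ({a,b}, [n], δ) with δ(i,b) = i+1 for i < n-1, δ(n-1,b) = 0, δ(i,a) = i+1 for 1 ≤ i ≤ n-3, δ(n-1,a) = 0, δ(n-2,a) = 1, δ(0,a) = 3, is completely reachable. -/

import Mathlib

open Finset

universe u v

variable {Q : Type u} {A : Type v}

/-- Extended transition function on words (lists of letters). -/
def dw (δ : Q → A → Q) (q : Q) (w : List A) : Q := w.foldl δ q

/-- A subset `S` of the state set is reachable if it is the image of the
full state set under some word. -/
def reach [Fintype Q] [DecidableEq Q] (δ : Q → A → Q) (S : Finset Q) : Prop :=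
  ∃ w : List A, Finset.univ.image (fun q => dw δ q w) = S

/-- Rank of a word: cardinality of the image of the state set under it. -/
def rkw [Fintype Q] [DecidableEq Q] (δ : Q → A → Q) (w : List A) : ℕ :=
  (Finset.univ.image (fun q => dw δ q w)).card

/-- Rank of a letter. -/
def rkl [Fintype Q] [DecidableEq Q] (δ : Q → A → Q) (a : A) : ℕ :=
  (Finset.univ.image (fun q => δ q a)).card

/-- A map is a cyclic permutation with a single orbit. -/
def isCyclicPerm (f : Q → Q) : Prop :=
  Function.Bijective f ∧ ∀ p q : Q, ∃ k : ℕ, f^[k] p = q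

/-- Two subsets of states are distinguishable in the power automaton:
some word maps exactly one of them to a singleton. -/
def distinguishable [DecidableEq Q] (δ : Q → A → Q) (S T : Finset Q) : Prop :=
  ∃ u : List A,
    Xor' ((S.image (fun q => dw δ q u)).card = 1)
         ((T.image (fun q => dw δ q u)).card = 1)

/-- The set of synchronizing words. -/
def Syn [Fintype Q] [DecidableEq Q] (δ : Q → A → Q) : Set (List A) :=
  {w | (Finset.univ.image (fun q => dw δ q w)).card = 1}

/-- The Nerode right-congruence of a language. -/
def nerode (L : Set (List A)) : Setoid (List A) where
  r u v := ∀ x : List A, u ++ x ∈ L ↔ v ++ x ∈ L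
  iseqv := ⟨fun _ _ => Iff.rfl, fun h x => (h x).symm, fun h1 h2 x => (h1 x).trans (h2 x)⟩

/-- State complexity of a language: number of Nerode classes. -/
noncomputable def sc (L : Set (List A)) : ℕ := Nat.card (Quotient (nerode L))

/-- Complete reachability. -/
def complReach [Fintype Q] [DecidableEq Q] (δ : Q → A → Q) : Prop :=
  ∀ S : Finset Q, S.Nonempty → ∃ w : List A, Finset.univ.image (fun q => dw δ q w) = S

/-- The permutation group generated by the permutational letters. -/
def permGroup [Fintype Q] [DecidableEq Q] (δ : Q → A → Q) : Subgroup (Equiv.Perm Q) :=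
  Subgroup.closure {π : Equiv.Perm Q | ∃ a : A, ∀ q : Q, π q = δ q a}

/-- The transition function of the automaton `K_n`; the letter `true` is `b`
(the cyclic permutation) and `false` is `a`. -/
def Kdelta (n : ℕ) [NeZero n] (i : Fin n) (c : Bool) : Fin n :=
  if c then i + 1
  else if i.val = 0 then ⟨3 % n, Nat.mod_lt 3 (NeZero.pos n)⟩
  else if i.val = n - 1 then ⟨0, NeZero.pos n⟩
  else if i.val = n - 2 then ⟨1 % n, Nat.mod_lt 1 (NeZero.pos n)⟩
  else i + 1

open scoped Fin.CommRing Fin.NatCast Fin.IntCast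

section Aux

variable {n : ℕ} [NeZero n]

lemma dw_append (δ : Q → A → Q) (q : Q) (w v : List A) :
    dw δ q (w ++ v) = dw δ (dw δ q w) v := List.foldl_append

lemma image_dw_append [Fintype Q] [DecidableEq Q] (δ : Q → A → Q) (w v : List A) :
    Finset.univ.image (fun q => dw δ q (w ++ v)) =
      (Finset.univ.image (fun q => dw δ q w)).image (fun q => dw δ q v) := by
  rw [Finset.image_image]
  exact Finset.image_congr (fun q _ => dw_append δ q w v)

lemma val3 (hn : 5 < n) : ((3:Fin n)).val = 3 := Fin.val_cast_of_lt (a := 3) (by omega)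
lemma val1 (hn : 5 < n) : ((1:Fin n)).val = 1 := Fin.val_cast_of_lt (a := 1) (by omega)

lemma eq_neg_one_of_val (hn : 5 < n) (y : Fin n) (h : y.val = n - 1) : y = -1 := by
  have h1 : (y + 1).val = 0 := by
    rw [Fin.val_add, Fin.val_one', h]
    have h2 : 1 % n = 1 := Nat.mod_eq_of_lt (by omega)
    rw [h2, Nat.sub_add_cancel (by omega), Nat.mod_self]
  have h0 : y + 1 = 0 := Fin.ext (by simpa using h1)
  linear_combination h0

/-- shift by j via the letter b -/
lemma dw_replicate (q : Fin n) (j : ℕ) :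
    dw (Kdelta n) q (List.replicate j true) = q + (j : Fin n) := by
  induction j generalizing q with
  | zero => simp [dw]
  | succ j ih =>
    rw [List.replicate_succ]
    show dw (Kdelta n) (Kdelta n q true) (List.replicate j true) = _
    rw [ih]
    simp only [Kdelta, if_pos]
    push_cast
    ring

/-- the a letter as a map -/
def amap (n : ℕ) [NeZero n] (q : Fin n) : Fin n := Kdelta n q false

/-- explicit preimage map for `amap` -/
def pmap (n : ℕ) [NeZero n] (y : Fin n) : Fin n :=
  if y.val = 1 then ⟨n - 2, by have := NeZero.pos n; omega⟩
  else if y.val = 0 then ⟨n - 1, by have := NeZero.pos n; omega⟩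
  else ⟨y.val - 1, by have := y.isLt; omega⟩

lemma amap_val (hn : 5 < n) (q : Fin n) :
    (amap n q).val = if q.val = 0 then 3 else if q.val = n - 1 then 0
      else if q.val = n - 2 then 1 else q.val + 1 := by
  have hql := q.isLt
  unfold amap Kdelta
  simp only [Bool.false_eq_true, if_false]
  split_ifs with h0 h1 h2
  · exact Nat.mod_eq_of_lt (by omega)
  · rfl
  · exact Nat.mod_eq_of_lt (by omega)
  · rw [Fin.val_add, Fin.val_one', Nat.mod_eq_of_lt (show 1 < n by omega),
      Nat.mod_eq_of_lt (by omega)]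

lemma pmap_val (y : Fin n) :
    (pmap n y).val = if y.val = 1 then n - 2 else if y.val = 0 then n - 1
      else y.val - 1 := by
  unfold pmap
  split_ifs <;> rfl

lemma amap_pmap (hn : 5 < n) (y : Fin n) (hy : y.val ≠ n - 1) : amap n (pmap n y) = y := by
  have hyl := y.isLt
  refine Fin.ext ?_
  rw [amap_val hn, pmap_val]
  split_ifs <;> omega

lemma pmap_ne_zero (hn : 5 < n) (y : Fin n) : pmap n y ≠ 0 := by
  intro h
  have hv := congrArg Fin.val h
  rw [pmap_val, Fin.val_zero] at hv
  have hyl := y.isLt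
  split_ifs at hv <;> omega

lemma pmap_injOn (hn : 5 < n) (x y : Fin n) (hx : x.val ≠ n - 1) (hy : y.val ≠ n - 1)
    (h : pmap n x = pmap n y) : x = y := by
  have hxl := x.isLt; have hyl := y.isLt
  have hv := congrArg Fin.val h
  rw [pmap_val, pmap_val] at hv
  refine Fin.ext ?_
  split_ifs at hv <;> omega

/-- the key preimage-set construction -/
lemma step_lemma (hn : 5 < n) (S : Finset (Fin n)) (h3 : (3:Fin n) ∈ S)
    (hlast : ∀ y ∈ S, y.val ≠ n - 1) :
    ∃ T : Finset (Fin n), T.card = S.card + 1 ∧ T.image (amap n) = S := by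
  refine ⟨insert 0 (S.image (pmap n)), ?_, ?_⟩
  · rw [Finset.card_insert_of_notMem, Finset.card_image_of_injOn]
    · intro x hx y hy hxy
      exact pmap_injOn hn x y (hlast x hx) (hlast y hy) hxy
    · intro h
      obtain ⟨y, _, hy⟩ := Finset.mem_image.mp h
      exact pmap_ne_zero hn y hy
  · rw [Finset.image_insert, Finset.image_image]
    have h1 : S.image (amap n ∘ pmap n) = S := by
      rw [show S.image (amap n ∘ pmap n) = S.image id from
        Finset.image_congr (fun y hy => amap_pmap hn y (hlast y hy)), Finset.image_id]
    rw [h1]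
    have h2 : amap n 0 = 3 := by
      refine Fin.ext ?_
      rw [amap_val hn, val3 hn]
      simp
    rw [h2]
    exact Finset.insert_eq_self.mpr h3

/-- escape element: some s in S with s - 4 not in S -/
lemma exists_escape (hodd : Odd n) (hn : 5 < n) (S : Finset (Fin n)) (hne : S.Nonempty)
    (hcard : S.card < n) : ∃ s ∈ S, s + (-4) ∉ S := by
  by_contra hc
  push_neg at hc
  obtain ⟨s₀, hs₀⟩ := hne
  have key : ∀ j : ℕ, s₀ + (j : Fin n) * (-4) ∈ S := by
    intro j
    induction j with
    | zero => simpa using hs₀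
    | succ j ih =>
      have := hc _ ih
      have e : s₀ + ((j:ℕ)+1 : Fin n) * (-4) = (s₀ + (j : Fin n) * (-4)) + (-4) := by ring
      push_cast at e ⊢
      rw [e]
      exact this
  -- -4 is invertible since n odd
  have hhalf : (2 : Fin n) * (((n+1)/2 : ℕ) : Fin n) = 1 := by
    obtain ⟨m, hm⟩ := hodd
    have : ((2 * ((n+1)/2) : ℕ) : Fin n) = ((n+1 : ℕ) : Fin n) := by
      congr 1
      omega
    push_cast at this
    rw [Fin.natCast_self] at this
    rw [this]; ring
  set h := (((n+1)/2 : ℕ) : Fin n) with hh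
  have hinv : (-4 : Fin n) * (-(h * h)) = 1 := by
    have : (-4 : Fin n) * (-(h * h)) = (2 * h) * (2 * h) := by ring
    rw [this, hhalf]; ring
  have : S = Finset.univ := by
    refine Finset.eq_univ_of_forall (fun t => ?_)
    set x : Fin n := (t - s₀) * (-(h * h)) with hx
    have hxc : s₀ + ((x.val : ℕ) : Fin n) * (-4) = t := by
      rw [Fin.cast_val_eq_self, hx]
      have : (t - s₀) * (-(h * h)) * (-4) = (t - s₀) * ((-4) * (-(h*h))) := by ring
      rw [this, hinv]; ring
    have := key x.val
    rwa [hxc] at this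
  have hc2 : n ≤ S.card := by rw [this, Finset.card_univ, Fintype.card_fin]
  omega

lemma reach_univ : Finset.univ.image (fun q : Fin n => dw (Kdelta n) q []) = Finset.univ := by
  simp [dw]

/-- main induction -/
lemma key_lemma (hodd : Odd n) (hn : 5 < n) :
    ∀ k : ℕ, ∀ S : Finset (Fin n), S.Nonempty → n ≤ S.card + k →
      ∃ w : List Bool, Finset.univ.image (fun q => dw (Kdelta n) q w) = S := by
  intro k
  induction k with
  | zero =>
    intro S hne hcard
    have : S = Finset.univ := Finset.eq_univ_of_card S (le_antisymm
      (by simpa using Finset.card_le_univ S) (by simpa using hcard))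
    exact ⟨[], by rw [reach_univ, this]⟩
  | succ k ih =>
    intro S hne hcard
    by_cases hbig : n ≤ S.card + k
    · exact ih S hne hbig
    push_neg at hbig
    have hlt : S.card < n := by omega
    obtain ⟨s, hs, hesc⟩ := exists_escape hodd hn S hne hlt
    set S' := S.image (· + (3 - s)) with hS'
    have h3 : (3 : Fin n) ∈ S' := Finset.mem_image.mpr ⟨s, hs, by ring⟩
    have hlast : ∀ y ∈ S', y.val ≠ n - 1 := by
      intro y hy hval
      obtain ⟨x, hx, hxy⟩ := Finset.mem_image.mp hy
      have : y = -1 := eq_neg_one_of_val hn y hval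
      have hxval : x = s + (-4) := by
        have : x + (3 - s) = -1 := by rw [hxy, this]
        linear_combination this
      rw [hxval] at hx
      exact hesc hx
    obtain ⟨T, hTcard, hTim⟩ := step_lemma hn S' h3 hlast
    have hS'card : S'.card = S.card :=
      Finset.card_image_of_injective S (add_left_injective _)
    have hTne : T.Nonempty := Finset.card_pos.mp (by omega)
    obtain ⟨w, hw⟩ := ih T hTne (by omega)
    refine ⟨w ++ (false :: List.replicate ((s - 3 : Fin n)).val true), ?_⟩
    rw [image_dw_append, hw]
    have hstep : ∀ q : Fin n, dw (Kdelta n) q (false :: List.replicate ((s - 3 : Fin n)).val true)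
        = amap n q + (s - 3) := by
      intro q
      show dw (Kdelta n) (Kdelta n q false) (List.replicate _ true) = _
      rw [dw_replicate, Fin.cast_val_eq_self]
      rfl
    calc T.image (fun q => dw (Kdelta n) q (false :: List.replicate ((s - 3 : Fin n)).val true))
        = T.image (fun q => amap n q + (s - 3)) := Finset.image_congr (fun q _ => hstep q)
      _ = (T.image (amap n)).image (· + (s - 3)) := by rw [Finset.image_image]; rfl
      _ = S'.image (· + (s - 3)) := by rw [hTim]
      _ = S.image (fun x => x + (3 - s) + (s - 3)) := by rw [hS', Finset.image_image]; rfl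
      _ = S := by
          rw [show S.image (fun x => x + (3 - s) + (s - 3)) = S.image id from
            Finset.image_congr (fun x _ => by simp; ring), Finset.image_id]

end Aux

theorem Kn_complReach (n : ℕ) [NeZero n] (hodd : Odd n) (hn : 5 < n) :
    complReach (Kdelta n) := by
  intro S hS
  exact key_lemma hodd hn n S hS (by have := Finset.card_pos.mpr hS; omega)
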